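/- Let ω > 0, h > 0 with 0 < ω·h < 2√2 (equivalently ω²h² < 8). Set a = 1 + ω²h²/24 and b = −(1/24)·(48 − 22·ω²h² + ω⁴h⁴). Then every complex root z of the equation a·z² + b·z + a = 0 satisfies |z| = 1; in particular the symplectic Simpson scheme is stable under the condition 0 < ω·h < 2√2. -/

import Mathlib

/-- Under the stability condition 0 < ωh < 2√2, every complex root of the
characteristic equation of the symplectic Simpson scheme has modulus one. -/
theorem simpson_scheme_stability
    (ω h : ℝ) (hω : 0 < ω) (hh : 0 < h)
    (hstab : ω * h < 2 * Real.sqrt 2) (z : ℂ)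
    (hz : ((1 : ℂ) + (ω : ℂ) ^ 2 * (h : ℂ) ^ 2 / 24) * z ^ 2
        + (-(1 / 24) * (48 - 22 * (ω : ℂ) ^ 2 * (h : ℂ) ^ 2
            + (ω : ℂ) ^ 4 * (h : ℂ) ^ 4)) * z
        + ((1 : ℂ) + (ω : ℂ) ^ 2 * (h : ℂ) ^ 2 / 24) = 0) :
    ‖z‖ = 1 := by
  have h8 : ω ^ 2 * h ^ 2 < 8 := by
    have h1 : (ω * h) ^ 2 < (2 * Real.sqrt 2) ^ 2 :=
      pow_lt_pow_left₀ hstab (le_of_lt (mul_pos hω hh)) (by norm_num)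
    have h2 : Real.sqrt 2 ^ 2 = 2 := Real.sq_sqrt (by norm_num)
    nlinarith
  set p := z.re with hp
  set q := z.im with hqd
  have hzpq : z = ⟨p, q⟩ := rfl
  have hz' : ((24 : ℂ) + (ω:ℂ)^2*(h:ℂ)^2) * z^2
      - (48 - 22*(ω:ℂ)^2*(h:ℂ)^2 + (ω:ℂ)^4*(h:ℂ)^4) * z
      + (24 + (ω:ℂ)^2*(h:ℂ)^2) = 0 := by linear_combination 24 * hz
  rw [hzpq] at hz'
  obtain ⟨h1, h2⟩ := Complex.ext_iff.mp hz'
  simp only [Complex.add_re, Complex.add_im, Complex.mul_re, Complex.mul_im,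
    Complex.ofReal_re, Complex.ofReal_im, Complex.zero_re, Complex.zero_im,
    Complex.one_re, Complex.one_im, Complex.neg_re, Complex.neg_im,
    Complex.sub_re, Complex.sub_im, ← Complex.ofReal_pow, pow_two, Complex.re_ofNat, Complex.im_ofNat] at h1 h2
  ring_nf at h1 h2
  have key : p ^ 2 + q ^ 2 = 1 := by
    rcases eq_or_ne q 0 with hq | hq
    · exfalso
      rw [hq] at h1
      have e8 : (0:ℝ) < 8 - ω^2*h^2 := by linarith
      have e12 : (0:ℝ) < 12 - ω^2*h^2 := by linarith
      have e24 : (0:ℝ) < 24 - ω^2*h^2 := by linarith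
      have ex : (0:ℝ) < ω^2*h^2 := by positivity
      have hcomb : (2*(24 + ω^2*h^2)*p - (48 - 22*(ω^2*h^2) + (ω^2*h^2)^2))^2
          + (ω^2*h^2)*(24 - ω^2*h^2)*(8 - ω^2*h^2)*(12 - ω^2*h^2)
          = 4*(24 + ω^2*h^2)*(24 + ω^2*h^2 + ω ^ 2 * h ^ 2 * p * 22
            + ω ^ 2 * h ^ 2 * p ^ 2 - ω ^ 2 * h ^ 2 * 0 ^ 2
            - ω ^ 4 * h ^ 4 * p - p * 48 + p ^ 2 * 24 - 0 ^ 2 * 24) := by ring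
      rw [h1] at hcomb
      nlinarith [sq_nonneg (2*(24 + ω^2*h^2)*p - (48 - 22*(ω^2*h^2) + (ω^2*h^2)^2)),
        mul_pos (mul_pos (mul_pos ex e24) e8) e12]
    · have hfac : q * (2*(24 + ω^2*h^2)*p - (48 - 22*(ω^2*h^2) + (ω^2*h^2)^2)) = 0 := by
        linear_combination h2
      have h3 : 2*(24 + ω^2*h^2)*p - (48 - 22*(ω^2*h^2) + (ω^2*h^2)^2) = 0 :=
        (mul_eq_zero.mp hfac).resolve_left hq
      have h4 : (24 + ω^2*h^2) * (1 - p^2 - q^2) = 0 := by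
        linear_combination h1 - p * h3
      have hApos : (0:ℝ) < 24 + ω ^ 2 * h ^ 2 := by positivity
      have := (mul_eq_zero.mp h4).resolve_left (ne_of_gt hApos)
      linarith
  have : Complex.normSq z = 1 := by
    simp [Complex.normSq_apply, ← hp, ← hqd]; nlinarith [key]
  rw [Complex.norm_def, this, Real.sqrt_one]
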